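/- Let P^⊥ and Q^⊥ be the linear cellular automaton shifts determined by Φ and Ψ respectively, and suppose S(Φ) ⊆ S(Ψ). Then every topological homomorphism φ : P^⊥ → Q^⊥ is additive: φ(x + y) = φ(x) + φ(y) for all x, y ∈ P^⊥. -/

import Mathlib

open MeasureTheory Filter Topology

namespace LCA

/-- The full shift `𝔽_p^{ℤ^d}`. -/
abbrev Full (p d : ℕ) : Type := (Fin d → ℤ) → ZMod p

/-- The shift action: `(σ_g x)(n) = x(n+g)`. -/
def shift (p d : ℕ) (g : Fin d → ℤ) (x : Full p d) : Full p d := fun n => x (n + g)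

/-- `e_d = (0,…,0,1)`, the exponent of the "time" variable `X_d`. -/
def eLast (d : ℕ) : Fin d → ℤ := fun i => if (i : ℕ) = d - 1 then 1 else 0

/-- The linear cellular automaton shift `P^⊥` for `P = X_d − Φ`, as a set:
all `x` with `x(n+e_d) = Σ_{m ∈ S(Φ)} Φ(m)·x(n+m)` for every `n`. -/
def Pperp (p d : ℕ) (Φ : (Fin d → ℤ) →₀ ZMod p) : Set (Full p d) :=
  {x | ∀ n : Fin d → ℤ, x (n + eLast d) = ∑ m ∈ Φ.support, Φ m * x (n + m)}

/-- `P^⊥` as a closed, shift-invariant subgroup of the full shift. -/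
def PperpGroup (p d : ℕ) (Φ : (Fin d → ℤ) →₀ ZMod p) : AddSubgroup (Full p d) where
  carrier := Pperp p d Φ
  zero_mem' := by intro n; simp
  add_mem' := by
    intro x y hx hy n
    simp only [Pi.add_apply, hx n, hy n, mul_add, Finset.sum_add_distrib]
  neg_mem' := by
    intro x hx n
    simp only [Pi.neg_apply, hx n, mul_neg, Finset.sum_neg_distrib, neg_inj]

lemma shift_mem_Pperp (p d : ℕ) (Φ : (Fin d → ℤ) →₀ ZMod p) (g : Fin d → ℤ)
    {x : Full p d} (hx : x ∈ Pperp p d Φ) : shift p d g x ∈ Pperp p d Φ := by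
  intro n
  simpa [shift, add_right_comm] using hx (n + g)

/-- The shift action restricted to `P^⊥`. -/
def shiftSub (p d : ℕ) (Φ : (Fin d → ℤ) →₀ ZMod p) (g : Fin d → ℤ)
    (x : PperpGroup p d Φ) : PperpGroup p d Φ :=
  ⟨shift p d g x.1, shift_mem_Pperp p d Φ g x.2⟩

end LCA

namespace LCAAux
open LCA

variable {p d : ℕ}

/-- The convolution action of a Laurent polynomial on the full shift, as an `AddMonoidHom`
in the polynomial variable. -/
noncomputable def actHom (x : Full p d) : ((Fin d → ℤ) →₀ ZMod p) →+ Full p d where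
  toFun Q := fun n => Q.sum fun m c => c * x (n + m)
  map_zero' := by funext n; simp
  map_add' Q R := by
    funext n
    simp only [Pi.add_apply]
    exact Finsupp.sum_add_index' (by simp) (by intros; rw [add_mul])

noncomputable def act (Q : (Fin d → ℤ) →₀ ZMod p) (x : Full p d) : Full p d := actHom x Q

lemma act_apply (Q : (Fin d → ℤ) →₀ ZMod p) (x : Full p d) (n : Fin d → ℤ) :
    act Q x n = ∑ m ∈ Q.support, Q m * x (n + m) := rfl

lemma act_single (a : Fin d → ℤ) (b : ZMod p) (x : Full p d) :
    act (AddMonoidAlgebra.single a b).coeff x = fun n => b * x (n + a) := by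
  funext n
  show (AddMonoidAlgebra.single a b).coeff.sum (fun m c => c * x (n + m)) = _
  exact Finsupp.sum_single_index (by simp)

lemma act_sum {ι : Type*} (s : Finset ι) (f : ι → ((Fin d → ℤ) →₀ ZMod p)) (x : Full p d) :
    act (∑ i ∈ s, f i) x = ∑ i ∈ s, act (f i) x := map_sum (actHom x) f s

lemma act_act (Q R : (Fin d → ℤ) →₀ ZMod p) (x : Full p d) :
    act Q (act R x) = act (AddMonoidAlgebra.ofCoeff Q * AddMonoidAlgebra.ofCoeff R).coeff x := by
  rw [AddMonoidAlgebra.mul_def]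
  simp only [Finsupp.sum, AddMonoidAlgebra.coeff_ofCoeff, AddMonoidAlgebra.coeff_sum]
  rw [act_sum]
  funext n
  rw [Finset.sum_apply, act_apply]
  refine Finset.sum_congr rfl fun a₁ h₁ => ?_
  rw [act_sum, Finset.sum_apply]
  simp only [act_single]
  rw [act_apply, Finset.mul_sum]
  refine Finset.sum_congr rfl fun a₂ h₂ => ?_
  rw [← mul_assoc, ← add_assoc]

variable {Φ : (Fin d → ℤ) →₀ ZMod p}

lemma shift_shift (g h : Fin d → ℤ) (x : Full p d) :
    shift p d g (shift p d h x) = shift p d (g + h) x := by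
  funext n; simp [shift, add_assoc]

lemma shift_zero (x : Full p d) : shift p d 0 x = x := by funext n; simp [shift]

lemma shift_add_pt (g : Fin d → ℤ) (x y : Full p d) :
    shift p d g (x + y) = shift p d g x + shift p d g y := rfl

lemma act_shift (Q : (Fin d → ℤ) →₀ ZMod p) (g : Fin d → ℤ) (x : Full p d) :
    act Q (shift p d g x) = shift p d g (act Q x) := by
  funext n
  simp only [act_apply, shift]
  exact Finset.sum_congr rfl fun m _ => by rw [add_right_comm]

lemma mem_pperp_iff {x : Full p d} :
    x ∈ Pperp p d Φ ↔ shift p d (eLast d) x = act Φ x := by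
  constructor
  · exact fun h => funext fun n => h n
  · exact fun h n => congrFun h n

lemma act_mem {x : Full p d} (hx : x ∈ Pperp p d Φ) (Q : (Fin d → ℤ) →₀ ZMod p) :
    act Q x ∈ Pperp p d Φ := by
  rw [mem_pperp_iff] at hx ⊢
  rw [← act_shift, hx, act_act, act_act, mul_comm]

noncomputable def apow (Q : (Fin d → ℤ) →₀ ZMod p) (j : ℕ) :
    (Fin d → ℤ) →₀ ZMod p := (AddMonoidAlgebra.ofCoeff Q ^ j).coeff

lemma shift_nsmul {x : Full p d} (hx : x ∈ Pperp p d Φ) (j : ℕ) :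
    shift p d (j • eLast d) x = act (apow Φ j) x := by
  induction j generalizing x with
  | zero =>
    rw [zero_smul, shift_zero]
    rw [show apow (p := p) (d := d) Φ 0 = (AddMonoidAlgebra.single 0 1).coeff from by
      rw [apow, pow_zero]; rfl, act_single]
    funext n; simp
  | succ j ih =>
    rw [succ_nsmul, ← shift_shift, mem_pperp_iff.mp hx, ih (act_mem hx Φ), act_act]
    simp only [apow, pow_succ, AddMonoidAlgebra.ofCoeff_coeff]

lemma charp_ama : CharP (AddMonoidAlgebra (ZMod p) (Fin d → ℤ)) p := by
  have h : Function.Injective (AddMonoidAlgebra.singleZeroRingHom (R := ZMod p) (M := Fin d → ℤ)) := by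
    intro a b hab
    simpa using congrArg (fun f => f.coeff (0 : Fin d → ℤ)) hab
  exact charP_of_injective_ringHom h p

lemma pow_expand [Fact p.Prime] (k : ℕ) :
    apow Φ (p ^ k) = ∑ m ∈ Φ.support, (AddMonoidAlgebra.single ((p ^ k) • m) (Φ m)).coeff := by
  haveI := charp_ama (p := p) (d := d)
  haveI : ExpChar (AddMonoidAlgebra (ZMod p) (Fin d → ℤ)) p :=
    ExpChar.prime (Fact.out : p.Prime)
  rw [apow]
  conv_lhs => rw [← AddMonoidAlgebra.sum_coeff_single (AddMonoidAlgebra.ofCoeff Φ)]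
  simp only [Finsupp.sum, AddMonoidAlgebra.coeff_ofCoeff]
  rw [sum_pow_char_pow, AddMonoidAlgebra.coeff_sum]
  refine Finset.sum_congr rfl fun m _ => ?_
  rw [AddMonoidAlgebra.single_pow,
    ZMod.pow_card_pow]

lemma key [Fact p.Prime] {x : Full p d} (hx : x ∈ Pperp p d Φ) (k : ℕ) (n : Fin d → ℤ) :
    x (n + (p ^ k) • eLast d) = ∑ m ∈ Φ.support, Φ m * x (n + (p ^ k) • m) := by
  have h1 : x (n + (p ^ k) • eLast d) = shift p d ((p ^ k) • eLast d) x n := rfl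
  rw [h1, shift_nsmul hx, pow_expand, act_sum, Finset.sum_apply]
  exact Finset.sum_congr rfl fun m _ => by rw [act_single]

lemma act_add_pt (Q : (Fin d → ℤ) →₀ ZMod p) (x y : Full p d) :
    act Q (x + y) = act Q x + act Q y := by
  funext n
  simp only [act_apply, Pi.add_apply, mul_add, Finset.sum_add_distrib]

/-- dot product of integer vectors -/
def dot (w v : Fin d → ℤ) : ℤ := ∑ i, w i * v i

lemma dot_add (w a b : Fin d → ℤ) : dot w (a + b) = dot w a + dot w b := by
  simp [dot, mul_add, Finset.sum_add_distrib]

lemma dot_smul_left (t : ℤ) (u v : Fin d → ℤ) (w : Fin d → ℤ) :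
    dot (w + t • u) v = dot w v + t * dot u v := by
  simp [dot, add_mul, Finset.sum_add_distrib, Finset.mul_sum, mul_assoc]

lemma exists_dot_ne (D : Finset (Fin d → ℤ)) (hD : ∀ v ∈ D, v ≠ 0) :
    ∃ w : Fin d → ℤ, ∀ v ∈ D, dot w v ≠ 0 := by
  classical
  induction D using Finset.induction_on with
  | empty => exact ⟨0, by simp⟩
  | @insert v D' hv ih =>
    obtain ⟨w, hw⟩ := ih (fun v' h => hD v' (Finset.mem_insert_of_mem h))
    have hvne : v ≠ 0 := hD v (Finset.mem_insert_self v D')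
    obtain ⟨i, hi⟩ := Function.ne_iff.mp hvne
    set u : Fin d → ℤ := fun j => if j = i then 1 else 0 with hu
    have hdu : dot u v = v i := by
      rw [dot, Finset.sum_eq_single i]
      · simp [hu]
      · intro j _ hj; simp [hu, hj]
      · intro h; exact absurd (Finset.mem_univ i) h
    have hdune : dot u v ≠ 0 := by rw [hdu]; simpa using hi
    set B : Finset ℤ := (insert v D').image (fun v' => -dot w v' / dot u v') with hB
    obtain ⟨t, ht⟩ := Infinite.exists_notMem_finset B
    refine ⟨w + t • u, fun v' hv' => ?_⟩
    intro h0
    rw [dot_smul_left] at h0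
    by_cases hduv : dot u v' = 0
    · rw [hduv, mul_zero, add_zero] at h0
      rcases Finset.mem_insert.mp hv' with rfl | hmem
      · exact hdune hduv
      · exact hw v' hmem h0
    · apply ht
      rw [hB, Finset.mem_image]
      refine ⟨v', hv', ?_⟩
      have : t * dot u v' = -dot w v' := by linarith
      rw [← this, Int.mul_ediv_cancel t hduv]

lemma exists_sep (S : Finset (Fin d → ℤ)) :
    ∃ w : Fin d → ℤ, ∀ a ∈ S, ∀ b ∈ S, dot w a = dot w b → a = b := by
  classical
  set D := ((S ×ˢ S).image (fun q => q.1 - q.2)).filter (fun v => v ≠ 0) with hD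
  obtain ⟨w, hw⟩ := exists_dot_ne D (fun v hv => (Finset.mem_filter.mp hv).2)
  refine ⟨w, fun a ha b hb hab => ?_⟩
  by_contra hne
  have hmem : a - b ∈ D := by
    rw [hD, Finset.mem_filter]
    refine ⟨Finset.mem_image.mpr ⟨(a, b), Finset.mem_product.mpr ⟨ha, hb⟩, rfl⟩, sub_ne_zero.mpr hne⟩
  apply hw _ hmem
  have : dot w (a - b) + dot w b = dot w a := by rw [← dot_add]; ring_nf
  omega

variable [Fact p.Prime]

lemma partial_solve (hΦne : Φ.support.Nonempty) (w : Fin d → ℤ)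
    (hsep : ∀ a ∈ Φ.support, ∀ b ∈ Φ.support, dot w a = dot w b → a = b)
    (ζ : Full p d) (F : Finset (Fin d → ℤ)) :
    ∃ ξ : Full p d, ∀ n ∈ F, act Φ ξ n = ζ n := by
  classical
  induction F using Finset.strongInduction with
  | _ F ih =>
  rcases F.eq_empty_or_nonempty with rfl | hne
  · exact ⟨0, by simp⟩
  obtain ⟨n₁, hn₁, hmax⟩ := F.exists_max_image (fun n => dot w n) hne
  obtain ⟨ms, hms, hmmax⟩ := Φ.support.exists_max_image (fun m => dot w m) hΦne
  obtain ⟨ξ₀, hξ₀⟩ := ih (F.erase n₁) (Finset.erase_ssubset hn₁)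
  set c := (Φ ms)⁻¹ * (ζ n₁ - act Φ ξ₀ n₁) with hc
  set δ : Full p d := fun n' => if n' = n₁ + ms then c else 0 with hδ
  refine ⟨ξ₀ + δ, fun n hn => ?_⟩
  rw [show act Φ (ξ₀ + δ) n = act Φ ξ₀ n + act Φ δ n from congrFun (act_add_pt Φ ξ₀ δ) n]
  by_cases hne1 : n = n₁
  · subst hne1
    have h1 : act Φ δ n = Φ ms * c := by
      rw [act_apply, Finset.sum_eq_single ms]
      · rw [hδ]; simp
      · intro m hm hmne
        rw [hδ]
        have : ¬ (n + m = n + ms) := fun h => hmne (add_left_cancel h)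
        simp only [this, if_neg, not_false_iff, mul_zero]
      · intro h; exact absurd hms h
    rw [h1, hc, ← mul_assoc, mul_inv_cancel₀ (Finsupp.mem_support_iff.mp hms), one_mul]
    ring
  · have h1 : act Φ δ n = 0 := by
      rw [act_apply]
      apply Finset.sum_eq_zero
      intro m hm
      have : ¬ (n + m = n₁ + ms) := by
        intro h
        have hd1 : dot w n + dot w m = dot w n₁ + dot w ms := by
          rw [← dot_add, ← dot_add, h]
        have hd2 : dot w m ≤ dot w ms := hmmax m hm
        have hd3 : dot w n ≤ dot w n₁ := hmax n hn
        have hmeq : m = ms := hsep m hm ms hms (by omega)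
        exact hne1 (by rw [hmeq] at h; exact add_right_cancel h)
      rw [hδ]
      simp only [this, if_neg, not_false_iff, mul_zero]
    rw [h1, add_zero]
    exact hξ₀ n (Finset.mem_erase.mpr ⟨hne1, hn⟩)

lemma act_continuous (Q : (Fin d → ℤ) →₀ ZMod p) : Continuous (act (p := p) (d := d) Q) := by
  apply continuous_pi
  intro n
  simp only [act_apply]
  exact continuous_finset_sum _ fun m _ => continuous_const.mul (continuous_apply (n + m))

lemma act_surj (hΦne : Φ.support.Nonempty) (w : Fin d → ℤ)
    (hsep : ∀ a ∈ Φ.support, ∀ b ∈ Φ.support, dot w a = dot w b → a = b) :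
    Function.Surjective (act (p := p) (d := d) Φ) := by
  intro ζ
  have hclosed : IsClosed (Set.range (act (p := p) (d := d) Φ)) :=
    (isCompact_range (act_continuous Φ)).isClosed
  have hmem : ζ ∈ closure (Set.range (act (p := p) (d := d) Φ)) := by
    rw [mem_closure_iff]
    intro o ho hζ
    obtain ⟨I, u, h1, h2⟩ := isOpen_pi_iff.mp ho ζ hζ
    obtain ⟨ξ, hξ⟩ := partial_solve hΦne w hsep ζ I
    refine ⟨act Φ ξ, h2 ?_, Set.mem_range_self ξ⟩
    intro i hi
    rw [hξ i hi]
    exact (h1 i hi).2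
  rwa [hclosed.closure_eq] at hmem

open Pointwise in
noncomputable def cone (Φ : (Fin d → ℤ) →₀ ZMod p) : ℕ → Finset (Fin d → ℤ)
  | 0 => {0}
  | (j+1) => Φ.support + cone Φ j

open Pointwise in
lemma mem_cone_succ {Φ : (Fin d → ℤ) →₀ ZMod p} {m c : Fin d → ℤ} {j : ℕ}
    (hm : m ∈ Φ.support) (hc : c ∈ cone Φ j) : m + c ∈ cone Φ (j + 1) :=
  Finset.add_mem_add hm hc

lemma cone_det {x y : Full p d} (hx : x ∈ Pperp p d Φ) (hy : y ∈ Pperp p d Φ) (j : ℕ) :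
    ∀ n₀ : Fin d → ℤ, (∀ c ∈ cone Φ j, x (n₀ + c) = y (n₀ + c)) →
      x (n₀ + j • eLast d) = y (n₀ + j • eLast d) := by
  induction j with
  | zero =>
    intro n₀ h
    simpa using h 0 (by simp [cone])
  | succ j ih =>
    intro n₀ h
    have e1 : n₀ + (j+1) • eLast d = (n₀ + j • eLast d) + eLast d := by
      rw [succ_nsmul]; abel
    rw [e1, hx (n₀ + j • eLast d), hy (n₀ + j • eLast d)]
    refine Finset.sum_congr rfl fun m hm => ?_
    congr 1
    have e2 : n₀ + j • eLast d + m = (n₀ + m) + j • eLast d := by abel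
    rw [e2]
    apply ih (n₀ + m)
    intro c hc
    have e3 : n₀ + m + c = n₀ + (m + c) := by abel
    rw [e3]
    exact h (m + c) (mem_cone_succ hm hc)

variable {i₀ : Fin d}

lemma cone_idx (hΦs : ∀ m ∈ Φ.support, m i₀ = 0) :
    ∀ j, ∀ c ∈ cone Φ j, c i₀ = 0 := by
  intro j
  induction j with
  | zero => intro c hc; simp only [cone, Finset.mem_singleton] at hc; simp [hc]
  | succ j ih =>
    intro c hc
    obtain ⟨m, hm, c', hc', rfl⟩ := Finset.mem_add.mp hc
    rw [Pi.add_apply, hΦs m hm, ih c' hc', add_zero]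

lemma eLast_idx (hi₀ : (i₀ : ℕ) = d - 1) : eLast d i₀ = 1 := by
  simp [eLast, hi₀]

lemma slab_extend (hi₀ : (i₀ : ℕ) = d - 1) (hΦs : ∀ m ∈ Φ.support, m i₀ = 0)
    (hsurj : Function.Surjective (act (p := p) (d := d) Φ))
    (ξ : Full p d) (cc : ℤ) :
    ∃ x ∈ Pperp p d Φ, ∀ n : Fin d → ℤ, n i₀ = cc → x n = ξ n := by
  classical
  set ξ' : Full p d := fun n' => ξ (n' + cc • eLast d) with hξ'
  set back : ℕ → Full p d := fun s => Nat.rec ξ' (fun _ prev => Classical.choose (hsurj prev)) s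
    with hback
  have hbs : ∀ s, act Φ (back (s+1)) = back s := fun s => Classical.choose_spec (hsurj (back s))
  set o : ℤ → Full p d :=
    fun t => if cc ≤ t then (act Φ)^[(t - cc).toNat] ξ' else back ((cc - t).toNat) with ho
  have hstep : ∀ t : ℤ, o (t + 1) = act Φ (o t) := by
    intro t
    by_cases h1 : cc ≤ t
    · rw [ho]
      simp only [if_pos h1, if_pos (by omega : cc ≤ t + 1)]
      rw [show (t + 1 - cc).toNat = (t - cc).toNat + 1 by omega, Function.iterate_succ_apply']
    by_cases h2 : cc ≤ t + 1
    · rw [ho]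
      simp only [if_pos h2, if_neg h1]
      rw [show (t + 1 - cc).toNat = 0 by omega, show (cc - t).toNat = 1 by omega]
      rw [Function.iterate_zero_apply]
      exact (hbs 0).symm
    · rw [ho]
      simp only [if_neg h1, if_neg h2]
      rw [show (cc - t).toNat = (cc - (t+1)).toNat + 1 by omega]
      exact (hbs _).symm
  set x : Full p d := fun n => o (n i₀) (n - (n i₀) • eLast d) with hxdef
  have hidx : ∀ (n : Fin d → ℤ) (m : Fin d → ℤ), m i₀ = 0 → (n + m) i₀ = n i₀ := by
    intro n m hm; rw [Pi.add_apply, hm, add_zero]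
  refine ⟨x, ?_, ?_⟩
  · intro n
    have h1 : (n + eLast d) i₀ = n i₀ + 1 := by
      rw [Pi.add_apply, eLast_idx hi₀]
    have h2 : (n + eLast d) - ((n i₀ + 1) • eLast d) = n - (n i₀) • eLast d := by
      rw [add_smul, one_smul]; abel
    have h3 : x (n + eLast d) = o (n i₀ + 1) (n - (n i₀) • eLast d) := by
      rw [hxdef]; simp only; rw [h1, h2]
    rw [h3, hstep (n i₀), act_apply]
    refine Finset.sum_congr rfl fun m hm => ?_
    congr 1
    rw [hxdef]; simp only
    rw [hidx n m (hΦs m hm)]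
    congr 1
    abel
  · intro n hn
    rw [hxdef]; simp only [hn]
    rw [ho]
    simp only [le_refl, if_pos, sub_self, Int.toNat_zero, Function.iterate_zero_apply]
    rw [hξ']
    show ξ (n - cc • eLast d + cc • eLast d) = ξ n
    rw [sub_add_cancel]

lemma finset_pair_bound (G : Finset (Fin d → ℤ)) :
    ∃ M : ℕ, ∀ g ∈ G, ∀ g' ∈ G, ∀ i, (g i - g' i).natAbs ≤ M := by
  classical
  refine ⟨G.sup fun g => G.sup fun g' => Finset.univ.sup fun i => (g i - g' i).natAbs, ?_⟩
  intro g hg g' hg' i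
  have h1 : (g i - g' i).natAbs ≤ Finset.univ.sup fun j => (g j - g' j).natAbs :=
    Finset.le_sup (f := fun j => (g j - g' j).natAbs) (Finset.mem_univ i)
  have h2 := Finset.le_sup (f := fun g'' => Finset.univ.sup fun j => (g j - g'' j).natAbs) hg'
  have h3 := Finset.le_sup
    (f := fun g0 => G.sup fun g'' => Finset.univ.sup fun j => (g0 j - g'' j).natAbs) hg
  exact h1.trans (h2.trans h3)

set_option maxHeartbeats 1000000 in
lemma specification (hi₀ : (i₀ : ℕ) = d - 1) (hΦs : ∀ m ∈ Φ.support, m i₀ = 0)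
    (hp2 : 2 ≤ p)
    (hsurj : Function.Surjective (act (p := p) (d := d) Φ))
    (T : Finset (Fin d → ℤ)) (S : Finset (Fin d → ℤ)) (hS : ∀ m ∈ S, m i₀ = 0) :
    ∃ K : ℕ, ∀ k, K ≤ k → ∀ z : (Fin d → ℤ) → Full p d, (∀ m ∈ S, z m ∈ Pperp p d Φ) →
      ∃ x ∈ Pperp p d Φ, ∀ m ∈ S, ∀ n ∈ T, x (n + (p ^ k) • m) = z m (n + (p ^ k) • m) := by
  classical
  obtain ⟨r, hrT⟩ : ∃ r : ℕ, ∀ n ∈ T, (n i₀).natAbs ≤ r :=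
    ⟨T.sup fun n => (n i₀).natAbs, fun n hn => Finset.le_sup (f := fun n => (n i₀).natAbs) hn⟩
  set G₀ : Finset (Fin d → ℤ) :=
    T.biUnion (fun n => (cone Φ ((n i₀ + r).toNat)).image
      fun c => n - ((n i₀ + r).toNat) • eLast d + c) with hG₀
  clear_value G₀
  obtain ⟨M, hMb⟩ := finset_pair_bound (d := d) G₀
  refine ⟨M + 1, fun k hk z hz => ?_⟩
  have hpk : M < p ^ k := by
    calc M < 2 ^ M := Nat.lt_two_pow_self
      _ ≤ 2 ^ k := Nat.pow_le_pow_right (by omega) (by omega)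
      _ ≤ p ^ k := Nat.pow_le_pow_left hp2 k
  have hdisj : ∀ m ∈ S, ∀ m' ∈ S, ∀ g ∈ G₀, ∀ g' ∈ G₀,
      g + (p ^ k) • m = g' + (p ^ k) • m' → m = m' := by
    intro m hm m' hm' g hg g' hg' heq
    by_contra hne
    obtain ⟨i, hi⟩ := Function.ne_iff.mp hne
    have h1 : g i + (p ^ k : ℤ) * m i = g' i + (p ^ k : ℤ) * m' i := by
      have := congrFun heq i
      simpa [Pi.add_apply, Pi.smul_apply, nsmul_eq_mul] using this
    have h2 : (p ^ k : ℤ) * (m i - m' i) = g' i - g i := by ring_nf; linarith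
    have h3 : ((p ^ k : ℤ) * (m i - m' i)).natAbs = p ^ k * (m i - m' i).natAbs := by
      rw [Int.natAbs_mul, Int.natAbs_pow, Int.natAbs_natCast]
    have h4 : 1 ≤ (m i - m' i).natAbs := by omega
    have h5 : p ^ k ≤ p ^ k * (m i - m' i).natAbs := Nat.le_mul_of_pos_right _ (by omega)
    have h6 : (g' i - g i).natAbs ≤ M := hMb g' hg' g hg i
    omega
  set ξ : Full p d := fun n' =>
    if h : ∃ m, m ∈ S ∧ ∃ g ∈ G₀, n' = g + (p ^ k) • m then z h.choose n' else 0 with hξdef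
  clear_value ξ
  have hξ : ∀ m ∈ S, ∀ g ∈ G₀, ξ (g + (p ^ k) • m) = z m (g + (p ^ k) • m) := by
    intro m hm g hg
    have h : ∃ m', m' ∈ S ∧ ∃ g' ∈ G₀, g + (p ^ k) • m = g' + (p ^ k) • m' :=
      ⟨m, hm, g, hg, rfl⟩
    rw [hξdef]
    simp only [dif_pos h]
    obtain ⟨hS', g', hg', heq⟩ := h.choose_spec
    rw [hdisj h.choose hS' m hm g' hg' g hg heq.symm]
  obtain ⟨x, hxmem, hslab⟩ := slab_extend hi₀ hΦs hsurj ξ (-(r : ℤ))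
  refine ⟨x, hxmem, fun m hm n hn => ?_⟩
  set j : ℕ := (n i₀ + r).toNat with hj
  have hjz : (j : ℤ) = n i₀ + r := by
    have := hrT n hn
    rw [hj]; omega
  set n₀ : Fin d → ℤ := n + (p ^ k) • m - j • eLast d with hn₀
  have hfin : n₀ + j • eLast d = n + (p ^ k) • m := by rw [hn₀]; abel
  have hgoal := cone_det hxmem (hz m hm) j n₀ ?_
  · rw [hfin] at hgoal; exact hgoal
  intro c hc
  have hgmem : n - j • eLast d + c ∈ G₀ := by
    rw [hG₀]
    exact Finset.mem_biUnion.mpr ⟨n, hn, Finset.mem_image.mpr ⟨c, by rw [← hj]; exact hc, rfl⟩⟩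
  have heqg : n₀ + c = (n - j • eLast d + c) + (p ^ k) • m := by rw [hn₀]; abel
  have hidxc : (n₀ + c) i₀ = -(r : ℤ) := by
    rw [hn₀]
    simp only [Pi.add_apply, Pi.sub_apply, Pi.smul_apply]
    rw [hS m hm, eLast_idx hi₀, cone_idx hΦs _ c hc]
    simp only [smul_zero, nsmul_eq_mul, mul_one, mul_zero]
    omega
  rw [hslab _ hidxc, heqg, hξ m hm _ hgmem, ← heqg]
lemma sum_eq_pair {α β : Type*} [DecidableEq α] [AddCommMonoid β] (s : Finset α) (f : α → β)
    (a b : α) (ha : a ∈ s) (hb : b ∈ s) (hab : a ≠ b)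
    (h0 : ∀ c ∈ s, c ≠ a → c ≠ b → f c = 0) : ∑ c ∈ s, f c = f a + f b := by
  rw [← Finset.sum_pair hab]
  apply (Finset.sum_subset ?_ ?_).symm
  · intro c hc
    rcases Finset.mem_insert.mp hc with rfl | hc
    · exact ha
    · rw [Finset.mem_singleton.mp hc]; exact hb
  · intro c hc hc2
    simp only [Finset.mem_insert, Finset.mem_singleton] at hc2
    push_neg at hc2
    exact h0 c hc hc2.1 hc2.2

lemma pperp_closed : IsClosed (Pperp p d Φ) := by
  have h : Pperp p d Φ = ⋂ n : Fin d → ℤ,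
      {x : Full p d | x (n + eLast d) = ∑ m ∈ Φ.support, Φ m * x (n + m)} := by
    ext x
    simp only [Pperp, Set.mem_setOf_eq, Set.mem_iInter]
  rw [h]
  refine isClosed_iInter fun n => isClosed_eq (continuous_apply _) ?_
  exact continuous_finset_sum _ fun m _ => continuous_const.mul (continuous_apply _)

lemma exists_radius (f : {x : Full p d // x ∈ Pperp p d Φ} → ZMod p) (hf : Continuous f) :
    ∃ V : Finset (Fin d → ℤ), ∀ x y : {x : Full p d // x ∈ Pperp p d Φ},
      (∀ n ∈ V, x.1 n = y.1 n) → f x = f y := by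
  classical
  haveI : CompactSpace {x : Full p d // x ∈ Pperp p d Φ} :=
    isCompact_iff_compactSpace.mp (pperp_closed (Φ := Φ)).isCompact
  have hloc : ∀ x : {x : Full p d // x ∈ Pperp p d Φ}, ∃ V : Finset (Fin d → ℤ),
      ∀ y, (∀ n ∈ V, y.1 n = x.1 n) → f y = f x := by
    intro x
    have hopen : IsOpen (f ⁻¹' {f x}) := hf.isOpen_preimage _ (isOpen_discrete _)
    obtain ⟨U, hU, hUeq⟩ := isOpen_induced_iff.mp hopen
    have hxU : x.1 ∈ U := by
      have : x ∈ f ⁻¹' {f x} := by simp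
      rw [← hUeq] at this
      exact this
    obtain ⟨I, uu, h1, h2⟩ := isOpen_pi_iff.mp hU x.1 hxU
    refine ⟨I, fun y hy => ?_⟩
    have hyU : y.1 ∈ U := by
      apply h2
      intro n hn
      rw [hy n hn]
      exact (h1 n hn).2
    have : y ∈ f ⁻¹' {f x} := by rw [← hUeq]; exact hyU
    simpa using this
  choose Vf hVf using hloc
  have hcover : Set.univ ⊆ ⋃ x : {x : Full p d // x ∈ Pperp p d Φ},
      {y : {x : Full p d // x ∈ Pperp p d Φ} | ∀ n ∈ Vf x, y.1 n = x.1 n} := by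
    intro x _
    exact Set.mem_iUnion.mpr ⟨x, fun n _ => rfl⟩
  have hopen : ∀ x : {x : Full p d // x ∈ Pperp p d Φ},
      IsOpen {y : {x : Full p d // x ∈ Pperp p d Φ} | ∀ n ∈ Vf x, y.1 n = x.1 n} := by
    intro x
    have : {y : {x : Full p d // x ∈ Pperp p d Φ} | ∀ n ∈ Vf x, y.1 n = x.1 n}
        = ⋂ n ∈ (Vf x : Finset (Fin d → ℤ)), {y : {x : Full p d // x ∈ Pperp p d Φ} | y.1 n = x.1 n} := by
      ext y; simp
    rw [this]
    refine isOpen_biInter_finset fun n _ => ?_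
    have hc : Continuous (fun y : {x : Full p d // x ∈ Pperp p d Φ} => y.1 n) :=
      (continuous_apply n).comp continuous_subtype_val
    exact hc.isOpen_preimage {x.1 n} (isOpen_discrete _)
  obtain ⟨t, ht⟩ := isCompact_univ.elim_finite_subcover _ hopen hcover
  refine ⟨t.biUnion Vf, fun x y hxy => ?_⟩
  obtain ⟨i, hit, hi⟩ : ∃ i ∈ t, ∀ n ∈ Vf i, x.1 n = i.1 n := by
    have := ht (Set.mem_univ x)
    simpa using this
  have hy : ∀ n ∈ Vf i, y.1 n = i.1 n := by
    intro n hn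
    rw [← hxy n (Finset.mem_biUnion.mpr ⟨i, hit, hn⟩)]
    exact hi n hn
  rw [hVf i x hi, hVf i y hy]

/-- scalar multiple preserves `Pperp` -/
def cmul (c : ZMod p) (x : Full p d) : Full p d := fun n => c * x n

lemma cmul_mem {x : Full p d} (hx : x ∈ Pperp p d Φ) (c : ZMod p) :
    cmul c x ∈ Pperp p d Φ := by
  intro n
  show c * x (n + eLast d) = _
  rw [hx n, Finset.mul_sum]
  exact Finset.sum_congr rfl fun m _ => by show c * (Φ m * x (n+m)) = Φ m * (c * x (n+m)); ring

lemma zero_mem_pperp : (0 : Full p d) ∈ Pperp p d Φ := by intro n; simp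

end LCAAux


open LCA

/-- If `S(Φ) ⊆ S(Ψ)` then every topological homomorphism
`φ : P^⊥ → Q^⊥` is additive. -/
theorem hom_additive_of_subset (p d : ℕ) [Fact p.Prime] (hd : 2 ≤ d)
    (Φ Ψ : (Fin d → ℤ) →₀ ZMod p)
    (hΦsupp : ∀ m ∈ Φ.support, m ⟨d - 1, by omega⟩ = 0)
    (hΨsupp : ∀ m ∈ Ψ.support, m ⟨d - 1, by omega⟩ = 0)
    (hΦ2 : 2 ≤ Φ.support.card) (hΨ2 : 2 ≤ Ψ.support.card)
    (hsub : Φ.support ⊆ Ψ.support)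
    (φ : PperpGroup p d Φ → PperpGroup p d Ψ)
    (hcont : Continuous φ) (h0 : φ 0 = 0)
    (hequiv : ∀ (g : Fin d → ℤ) (x : PperpGroup p d Φ),
      φ (shiftSub p d Φ g x) = shiftSub p d Ψ g (φ x)) :
    ∀ x y : PperpGroup p d Φ, φ (x + y) = φ x + φ y := by
  classical
  have hp2 : 2 ≤ p := (Fact.out : p.Prime).two_le
  set i₀ : Fin d := ⟨d - 1, by omega⟩ with hi₀def
  have hi₀ : (i₀ : ℕ) = d - 1 := rfl
  have hΦs : ∀ m ∈ Φ.support, m i₀ = 0 := hΦsupp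
  have hΨs : ∀ m ∈ Ψ.support, m i₀ = 0 := hΨsupp
  -- radius of φ at coordinate 0
  have hfc : Continuous (fun x : {x : Full p d // x ∈ Pperp p d Φ} =>
      (φ ⟨x.1, x.2⟩).1 0) := by
    apply (continuous_apply (0 : Fin d → ℤ)).comp
    apply continuous_subtype_val.comp
    exact hcont.comp (continuous_subtype_val.subtype_mk _)
  obtain ⟨V, hV⟩ := LCAAux.exists_radius (Φ := Φ) _ hfc
  have hV' : ∀ x y : ↥(PperpGroup p d Φ), (∀ n ∈ V, x.1 n = y.1 n) →
      (φ x).1 0 = (φ y).1 0 := fun x y h => hV ⟨x.1, x.2⟩ ⟨y.1, y.2⟩ h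
  -- separating functional and surjectivity
  have hΦne : Φ.support.Nonempty := Finset.card_pos.mp (by omega)
  obtain ⟨w, hsep⟩ := LCAAux.exists_sep (d := d) Φ.support
  have hsurj := LCAAux.act_surj hΦne w hsep
  obtain ⟨K, hK⟩ := LCAAux.specification hi₀ hΦs hp2 hsurj V Ψ.support hΨs
  -- two distinct monomials of Φ
  obtain ⟨m0, hm0, m1, hm1, hne01⟩ := Finset.one_lt_card.mp (by omega : 1 < Φ.support.card)
  have h0ne : Φ m0 ≠ 0 := Finsupp.mem_support_iff.mp hm0
  have h1ne : Φ m1 ≠ 0 := Finsupp.mem_support_iff.mp hm1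
  set A : ↥(PperpGroup p d Φ) → ↥(PperpGroup p d Φ) :=
    fun a => ⟨LCAAux.cmul ((Φ m0)⁻¹) a.1, LCAAux.cmul_mem a.2 _⟩ with hA
  set B : ↥(PperpGroup p d Φ) → ↥(PperpGroup p d Φ) :=
    fun b => ⟨LCAAux.cmul ((Φ m1)⁻¹) b.1, LCAAux.cmul_mem b.2 _⟩ with hB
  have main : ∀ a b : ↥(PperpGroup p d Φ),
      (φ (a + b)).1 0 = Ψ m0 * (φ (A a)).1 0 + Ψ m1 * (φ (B b)).1 0 := by
    intro a b
    set z : (Fin d → ℤ) → Full p d := fun m =>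
      if m = m0 then LCAAux.cmul ((Φ m0)⁻¹) (shift p d (-((p ^ K : ℕ) • m0)) a.1)
      else if m = m1 then LCAAux.cmul ((Φ m1)⁻¹) (shift p d (-((p ^ K : ℕ) • m1)) b.1)
      else 0 with hzdef
    have hz : ∀ m ∈ Ψ.support, z m ∈ Pperp p d Φ := by
      intro m _
      simp only [hzdef]
      by_cases e0 : m = m0
      · subst e0
        rw [if_pos rfl]
        exact LCAAux.cmul_mem (shift_mem_Pperp p d Φ _ a.2) _
      by_cases e1 : m = m1
      · subst e1
        rw [if_neg e0, if_pos rfl]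
        exact LCAAux.cmul_mem (shift_mem_Pperp p d Φ _ b.2) _
      · rw [if_neg e0, if_neg e1]
        exact LCAAux.zero_mem_pperp
    obtain ⟨x, hxmem, hxag⟩ := hK K le_rfl z hz
    set xs : ↥(PperpGroup p d Φ) := ⟨x, hxmem⟩ with hxs
    -- agreement on the m0-window
    have hagree0 : ∀ n ∈ V, (shiftSub p d Φ ((p ^ K : ℕ) • m0) xs).1 n = (A a).1 n := by
      intro n hn
      show x (n + (p ^ K : ℕ) • m0) = (Φ m0)⁻¹ * a.1 n
      rw [hxag m0 (hsub hm0) n hn]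
      simp only [hzdef, if_pos rfl]
      show (Φ m0)⁻¹ * a.1 (n + (p ^ K : ℕ) • m0 + -((p ^ K : ℕ) • m0)) = _
      rw [add_neg_cancel_right]
    have hagree1 : ∀ n ∈ V, (shiftSub p d Φ ((p ^ K : ℕ) • m1) xs).1 n = (B b).1 n := by
      intro n hn
      show x (n + (p ^ K : ℕ) • m1) = (Φ m1)⁻¹ * b.1 n
      rw [hxag m1 (hsub hm1) n hn]
      simp only [hzdef, if_neg (Ne.symm hne01), if_pos rfl]
      show (Φ m1)⁻¹ * b.1 (n + (p ^ K : ℕ) • m1 + -((p ^ K : ℕ) • m1)) = _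
      rw [add_neg_cancel_right]
    have hagreez : ∀ m ∈ Ψ.support, m ≠ m0 → m ≠ m1 → ∀ n ∈ V,
        (shiftSub p d Φ ((p ^ K : ℕ) • m) xs).1 n = (0 : ↥(PperpGroup p d Φ)).1 n := by
      intro m hm e0 e1 n hn
      show x (n + (p ^ K : ℕ) • m) = (0 : ↥(PperpGroup p d Φ)).1 n
      rw [hxag m hm n hn]
      simp only [hzdef, if_neg e0, if_neg e1]
      simp
    -- the sum window
    have hagreeSum : ∀ n ∈ V, (shiftSub p d Φ ((p ^ K : ℕ) • eLast d) xs).1 n = (a + b).1 n := by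
      intro n hn
      show x (n + (p ^ K : ℕ) • eLast d) = (a + b).1 n
      rw [LCAAux.key (Φ := Φ) hxmem K n]
      rw [LCAAux.sum_eq_pair Φ.support (fun m => Φ m * x (n + (p ^ K : ℕ) • m)) m0 m1 hm0 hm1
        hne01 ?_]
      · rw [hxag m0 (hsub hm0) n hn, hxag m1 (hsub hm1) n hn]
        simp only [hzdef, if_pos rfl, if_neg (Ne.symm hne01)]
        show Φ m0 * ((Φ m0)⁻¹ * a.1 (n + (p ^ K : ℕ) • m0 + -((p ^ K : ℕ) • m0)))
            + Φ m1 * ((Φ m1)⁻¹ * b.1 (n + (p ^ K : ℕ) • m1 + -((p ^ K : ℕ) • m1))) = (a + b).1 n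
        rw [add_neg_cancel_right, add_neg_cancel_right, ← mul_assoc, ← mul_assoc,
          mul_inv_cancel₀ h0ne, mul_inv_cancel₀ h1ne, one_mul, one_mul]
        rfl
      · intro c hc e0 e1
        show Φ c * x (n + (p ^ K : ℕ) • c) = 0
        rw [hxag c (hsub hc) n hn]
        simp only [hzdef, if_neg e0, if_neg e1]
        simp
    -- compute
    have step1 : (φ (a + b)).1 0 = (φ xs).1 (0 + (p ^ K : ℕ) • eLast d) := by
      rw [← (hV' _ _ hagreeSum), hequiv]
      rfl
    have step2 : (φ xs).1 (0 + (p ^ K : ℕ) • eLast d)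
        = ∑ m ∈ Ψ.support, Ψ m * (φ (shiftSub p d Φ ((p ^ K : ℕ) • m) xs)).1 0 := by
      rw [LCAAux.key (Φ := Ψ) (φ xs).2 K 0]
      refine Finset.sum_congr rfl fun m _ => ?_
      congr 1
      rw [hequiv]
      rfl
    rw [step1, step2,
      LCAAux.sum_eq_pair Ψ.support
        (fun m => Ψ m * (φ (shiftSub p d Φ ((p ^ K : ℕ) • m) xs)).1 0) m0 m1
        (hsub hm0) (hsub hm1) hne01 ?_]
    · rw [hV' _ _ hagree0, hV' _ _ hagree1]
    · intro c hc e0 e1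
      show Ψ c * (φ (shiftSub p d Φ ((p ^ K : ℕ) • c) xs)).1 0 = 0
      rw [hV' _ _ (hagreez c hc e0 e1), h0]
      simp
  -- specialize to get additivity at coordinate 0
  have hA0 : A 0 = 0 := by
    rw [hA]
    apply Subtype.ext
    funext n
    show (Φ m0)⁻¹ * (0 : ↥(PperpGroup p d Φ)).1 n = (0 : ↥(PperpGroup p d Φ)).1 n
    simp
  have hB0 : B 0 = 0 := by
    rw [hB]
    apply Subtype.ext
    funext n
    show (Φ m1)⁻¹ * (0 : ↥(PperpGroup p d Φ)).1 n = (0 : ↥(PperpGroup p d Φ)).1 n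
    simp
  have main2 : ∀ a b : ↥(PperpGroup p d Φ),
      (φ (a + b)).1 0 = (φ a).1 0 + (φ b).1 0 := by
    intro a b
    have h1 := main a b
    have h2 := main a 0
    have h3 := main 0 b
    rw [add_zero, hB0, h0] at h2
    rw [zero_add, hA0, h0] at h3
    simp only [ZeroMemClass.coe_zero, Pi.zero_apply, mul_zero, add_zero, zero_add] at h2 h3
    rw [h1, h2, h3]
  -- upgrade to all coordinates
  intro u v
  apply Subtype.ext
  funext g
  have e1 : (φ (u + v)).1 g = (φ (shiftSub p d Φ g (u + v))).1 0 := by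
    rw [hequiv]
    show (φ (u+v)).1 g = (φ (u+v)).1 (0 + g)
    rw [zero_add]
  have e2 : shiftSub p d Φ g (u + v) = shiftSub p d Φ g u + shiftSub p d Φ g v := by
    apply Subtype.ext
    rfl
  have e3 : ∀ t : ↥(PperpGroup p d Φ), (φ (shiftSub p d Φ g t)).1 0 = (φ t).1 g := by
    intro t
    rw [hequiv]
    show (φ t).1 (0 + g) = (φ t).1 g
    rw [zero_add]
  have : (φ (u + v)).1 g = (φ u).1 g + (φ v).1 g := by
    rw [e1, e2, main2, e3, e3]
  rw [this]
  rfl
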